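/- Let M ∈ ℝ_{≥0}^{R1×R2}, ε > 0, K = exp(−M/ε) (entrywise), and let μ ∈ P_{R1}, ν ∈ P_{R2} have strictly positive entries. Then the unique minimizer T*_ε of ⟨T,M⟩ − ε H(T) over Π(μ,ν) has the scaling form T*_ε = diag(u) K diag(v) for some entrywise positive vectors u ∈ ℝ_{>0}^{R1} and v ∈ ℝ_{>0}^{R2}. -/

import Mathlib

noncomputable section

open Finset

/-- The probability simplex in `ℝ^R`. -/
def probSimplex (R : ℕ) : Set (Fin R → ℝ) :=
  {p | (∀ r, 0 ≤ p r) ∧ ∑ r, p r = 1}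

/-- The transport polytope `Π(μ, ν)`. -/
def transportPolytope {R1 R2 : ℕ} (μ : Fin R1 → ℝ) (ν : Fin R2 → ℝ) :
    Set (Matrix (Fin R1) (Fin R2) ℝ) :=
  {T | (∀ m n, 0 ≤ T m n) ∧ (∀ m, ∑ n, T m n = μ m) ∧ (∀ n, ∑ m, T m n = ν n)}

/-- The entropy `H(T) = -∑ T_{mn} (log T_{mn} - 1)` (with `0 log 0 = 0`). -/
def entropyH {R1 R2 : ℕ} (T : Matrix (Fin R1) (Fin R2) ℝ) : ℝ :=
  -∑ m, ∑ n, T m n * (Real.log (T m n) - 1)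

/-- The entropy-regularized transport objective `⟨T, M⟩ - ε H(T)`. -/
def otObj {R1 R2 : ℕ} (M : Matrix (Fin R1) (Fin R2) ℝ) (ε : ℝ)
    (T : Matrix (Fin R1) (Fin R2) ℝ) : ℝ :=
  (∑ m, ∑ n, T m n * M m n) - ε * entropyH T


lemma slope_upper (a b : ℝ) (ha : 0 ≤ a) (hab : a ≤ b) (hb : 0 < b) :
    b * (Real.log b - 1) - a * (Real.log a - 1) ≤ (b - a) * Real.log b := by
  rcases eq_or_lt_of_le ha with h | h
  · simp [← h]
    nlinarith [Real.log_le_sub_one_of_pos hb]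
  · have h1 : Real.log (b / a) ≤ b / a - 1 := Real.log_le_sub_one_of_pos (by positivity)
    have h2 : Real.log (b / a) = Real.log b - Real.log a := Real.log_div hb.ne' h.ne'
    have h3 : a * (Real.log b - Real.log a) ≤ b - a := by
      have := mul_le_mul_of_nonneg_left h1 h.le
      rw [h2] at this
      calc a * (Real.log b - Real.log a) ≤ a * (b / a - 1) := this
        _ = b - a := by field_simp
    nlinarith

lemma slope_lower (a b : ℝ) (ha : 0 < a) (hab : a ≤ b) :
    (b - a) * Real.log a ≤ b * (Real.log b - 1) - a * (Real.log a - 1) := by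
  have hb : 0 < b := lt_of_lt_of_le ha hab
  have h1 : Real.log (a / b) ≤ a / b - 1 := Real.log_le_sub_one_of_pos (by positivity)
  have h2 : Real.log (a / b) = Real.log a - Real.log b := Real.log_div ha.ne' hb.ne'
  have h3 : b * (Real.log a - Real.log b) ≤ a - b := by
    have := mul_le_mul_of_nonneg_left h1 hb.le
    rw [h2] at this
    calc b * (Real.log a - Real.log b) ≤ b * (a / b - 1) := this
      _ = a - b := by field_simp
  nlinarith

lemma otObj_eq {R1 R2 : ℕ} (M : Matrix (Fin R1) (Fin R2) ℝ) (ε : ℝ)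
    (T : Matrix (Fin R1) (Fin R2) ℝ) :
    otObj M ε T = ∑ m, ∑ n, (T m n * M m n + ε * (T m n * (Real.log (T m n) - 1))) := by
  simp [otObj, entropyH, Finset.mul_sum, Finset.sum_add_distrib, sub_neg_eq_add]

set_option maxHeartbeats 1000000

-- positivity of minimizer
lemma minimizer_pos {R1 R2 : ℕ}
    (M : Matrix (Fin R1) (Fin R2) ℝ) (hM : ∀ m n, 0 ≤ M m n)
    (ε : ℝ) (hε : 0 < ε)
    (μ : Fin R1 → ℝ) (ν : Fin R2 → ℝ)
    (hμpos : ∀ m, 0 < μ m) (hνpos : ∀ n, 0 < ν n)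
    (T : Matrix (Fin R1) (Fin R2) ℝ)
    (hT : T ∈ transportPolytope μ ν)
    (hTmin : ∀ T' ∈ transportPolytope μ ν, otObj M ε T ≤ otObj M ε T') :
    ∀ m n, 0 < T m n := by
  obtain ⟨hTnn, hrow, hcol⟩ := hT
  by_contra h; push_neg at h
  obtain ⟨m0, n0, h00'⟩ := h
  have h00 : T m0 n0 = 0 := le_antisymm h00' (hTnn _ _)
  have hb : ∃ n, 0 < T m0 n := by
    by_contra hc; push_neg at hc
    have : μ m0 = 0 := by
      rw [← hrow m0]
      exact Finset.sum_eq_zero (fun n _ => le_antisymm (hc n) (hTnn m0 n))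
    exact absurd this (hμpos m0).ne'
  obtain ⟨n1, hb⟩ := hb
  have hc : ∃ m, 0 < T m n0 := by
    by_contra hc; push_neg at hc
    have : ν n0 = 0 := by
      rw [← hcol n0]
      exact Finset.sum_eq_zero (fun m _ => le_antisymm (hc m) (hTnn m n0))
    exact absurd this (hνpos n0).ne'
  obtain ⟨m1, hc⟩ := hc
  have hn : n1 ≠ n0 := by rintro rfl; exact hb.ne' h00
  have hm : m1 ≠ m0 := by rintro rfl; exact hc.ne' h00
  set b := T m0 n1 with hbdef
  set c := T m1 n0 with hcdef
  set δ : ℝ := min 1 (min (b/2) (c/2)) with hδdef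
  have hδ : 0 < δ := by positivity
  set Ctot : ℝ := ∑ m, ∑ n,
      (M m n + ε * |Real.log (T m n + 1)| + ε * |Real.log (T m n / 2)|) with hCdef
  set t : ℝ := min δ (Real.exp (-(Ctot + 1)/ε)) with htdef
  have ht : 0 < t := lt_min hδ (Real.exp_pos _)
  have htδ : t ≤ δ := min_le_left _ _
  have ht1 : t ≤ 1 := htδ.trans (min_le_left _ _)
  have htb : t ≤ b/2 := htδ.trans ((min_le_right _ _).trans (min_le_left _ _))
  have htc : t ≤ c/2 := htδ.trans ((min_le_right _ _).trans (min_le_right _ _))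
  have htlog : ε * Real.log t ≤ -(Ctot + 1) := by
    have : Real.log t ≤ -(Ctot + 1)/ε := by
      calc Real.log t ≤ Real.log (Real.exp (-(Ctot + 1)/ε)) :=
            Real.log_le_log ht (min_le_right _ _)
        _ = -(Ctot + 1)/ε := Real.log_exp _
    calc ε * Real.log t ≤ ε * (-(Ctot + 1)/ε) := by nlinarith
      _ = -(Ctot + 1) := by field_simp
  set d : Matrix (Fin R1) (Fin R2) ℝ := fun m n =>
      (if m = m0 ∧ n = n0 then (1:ℝ) else 0) + (if m = m1 ∧ n = n1 then 1 else 0)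
        - (if m = m0 ∧ n = n1 then 1 else 0) - (if m = m1 ∧ n = n0 then 1 else 0) with hddef
  set T' : Matrix (Fin R1) (Fin R2) ℝ := fun m n => T m n + t * d m n with hT'def
  have hT'mem : T' ∈ transportPolytope μ ν := by
    refine ⟨?_, ?_, ?_⟩
    · intro m n
      show 0 ≤ T m n + t * d m n
      by_cases hA : m = m0 ∧ n = n1
      · obtain ⟨rfl, rfl⟩ := hA
        have hd : d m n = -1 := by
          simp [hddef, hn, Ne.symm hm]
        rw [hd]; rw [← hbdef]; linarith
      · by_cases hB : m = m1 ∧ n = n0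
        · obtain ⟨rfl, rfl⟩ := hB
          have hd : d m n = -1 := by
            simp [hddef, Ne.symm hn, hm]
          rw [hd]; rw [← hcdef]; linarith
        · have hd : 0 ≤ d m n := by
            simp only [hddef, hA, hB, if_false]
            split_ifs <;> norm_num
          nlinarith [hTnn m n, mul_nonneg ht.le hd]
    · intro m
      have hzero : ∑ n, d m n = 0 := by
        simp [hddef, ite_and, Finset.sum_add_distrib, Finset.sum_sub_distrib,
          Finset.sum_ite_eq', Finset.sum_ite_eq]
      have : ∑ n, T' m n = (∑ n, T m n) + t * ∑ n, d m n := by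
        simp only [hT'def]
        rw [Finset.mul_sum, ← Finset.sum_add_distrib]
      rw [this, hrow m, hzero]; ring
    · intro n
      have hzero : ∑ m, d m n = 0 := by
        simp [hddef, ite_and, Finset.sum_add_distrib, Finset.sum_sub_distrib,
          Finset.sum_ite_eq', Finset.sum_ite_eq]
      have : ∑ m, T' m n = (∑ m, T m n) + t * ∑ m, d m n := by
        simp only [hT'def]
        rw [Finset.mul_sum, ← Finset.sum_add_distrib]
      rw [this, hcol n, hzero]; ring
  have key : ∀ m n,
      (T' m n * M m n + ε * (T' m n * (Real.log (T' m n) - 1)))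
        - (T m n * M m n + ε * (T m n * (Real.log (T m n) - 1)))
      ≤ t * (M m n + ε * |Real.log (T m n + 1)| + ε * |Real.log (T m n / 2)|)
        + (if m = m0 ∧ n = n0 then t * (ε * Real.log t) else 0) := by
    intro m n
    by_cases h0 : m = m0 ∧ n = n0
    · obtain ⟨rfl, rfl⟩ := h0
      have hd : d m n = 1 := by simp [hddef, Ne.symm hn, Ne.symm hm]
      have hx : T' m n = t := by simp [hT'def, hd, h00]
      rw [hx, h00, if_pos ⟨rfl, rfl⟩]
      simp only [Real.log_zero, zero_div, abs_zero, Real.log_one]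
      have h5 : |Real.log ((0:ℝ) + 1)| = 0 := by norm_num
      rw [h5]
      nlinarith [mul_pos hε ht]
    · by_cases h1 : m = m1 ∧ n = n1
      · obtain ⟨rfl, rfl⟩ := h1
        have hd : d m n = 1 := by simp [hddef, hm, hn]
        have hx : T' m n = T m n + t := by simp [hT'def, hd]
        rw [hx, if_neg h0]
        have ha : 0 ≤ T m n := hTnn m n
        have hlog : Real.log (T m n + t) ≤ |Real.log (T m n + 1)| := by
          calc Real.log (T m n + t) ≤ Real.log (T m n + 1) :=
                Real.log_le_log (by linarith) (by linarith)
            _ ≤ |Real.log (T m n + 1)| := le_abs_self _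
        have hs : (T m n + t) * (Real.log (T m n + t) - 1)
            - T m n * (Real.log (T m n) - 1) ≤ t * |Real.log (T m n + 1)| := by
          calc (T m n + t) * (Real.log (T m n + t) - 1) - T m n * (Real.log (T m n) - 1)
              ≤ (T m n + t - T m n) * Real.log (T m n + t) :=
                slope_upper (T m n) (T m n + t) ha (by linarith) (by linarith)
            _ = t * Real.log (T m n + t) := by ring
            _ ≤ t * |Real.log (T m n + 1)| := mul_le_mul_of_nonneg_left hlog ht.le
        have e1 : ε * ((T m n + t) * (Real.log (T m n + t) - 1)
            - T m n * (Real.log (T m n) - 1)) ≤ ε * (t * |Real.log (T m n + 1)|) :=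
          mul_le_mul_of_nonneg_left hs hε.le
        nlinarith [mul_nonneg (mul_nonneg ht.le hε.le) (abs_nonneg (Real.log (T m n / 2)))]
      · by_cases h2 : m = m0 ∧ n = n1
        · obtain ⟨rfl, rfl⟩ := h2
          have hd : d m n = -1 := by simp [hddef, hn, Ne.symm hm]
          have hx : T' m n = T m n - t := by simp [hT'def, hd]; ring
          rw [hx, if_neg h0]
          have hb2 : T m n = b := rfl
          have hpos : (0:ℝ) < b / 2 := by linarith
          have hlog : -Real.log (T m n - t) ≤ |Real.log (T m n / 2)| := by
            have ha1 : Real.log (b / 2) ≤ Real.log (T m n - t) :=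
              Real.log_le_log hpos (by rw [hb2]; linarith)
            have ha2 : -|Real.log (T m n / 2)| ≤ Real.log (T m n / 2) := neg_abs_le _
            rw [hb2] at ha2 ⊢
            linarith
          have hs : (T m n - t) * (Real.log (T m n - t) - 1)
              - T m n * (Real.log (T m n) - 1) ≤ t * |Real.log (T m n / 2)| := by
            have h4 := slope_lower (T m n - t) (T m n) (by rw [hb2]; linarith) (by linarith)
            have h5 : -(t * Real.log (T m n - t)) ≤ t * |Real.log (T m n / 2)| := by
              have := mul_le_mul_of_nonneg_left hlog ht.le
              nlinarith
            nlinarith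
          have e1 : ε * ((T m n - t) * (Real.log (T m n - t) - 1)
              - T m n * (Real.log (T m n) - 1)) ≤ ε * (t * |Real.log (T m n / 2)|) :=
            mul_le_mul_of_nonneg_left hs hε.le
          nlinarith [mul_nonneg (mul_nonneg ht.le hε.le) (abs_nonneg (Real.log (T m n + 1))),
            mul_nonneg ht.le (hM m n)]
        · by_cases h3 : m = m1 ∧ n = n0
          · obtain ⟨rfl, rfl⟩ := h3
            have hd : d m n = -1 := by simp [hddef, hm, Ne.symm hn]
            have hx : T' m n = T m n - t := by simp [hT'def, hd]; ring
            rw [hx, if_neg h0]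
            have hb2 : T m n = c := rfl
            have hpos : (0:ℝ) < c / 2 := by linarith
            have hlog : -Real.log (T m n - t) ≤ |Real.log (T m n / 2)| := by
              have ha1 : Real.log (c / 2) ≤ Real.log (T m n - t) :=
                Real.log_le_log hpos (by rw [hb2]; linarith)
              have ha2 : -|Real.log (T m n / 2)| ≤ Real.log (T m n / 2) := neg_abs_le _
              rw [hb2] at ha2 ⊢
              linarith
            have hs : (T m n - t) * (Real.log (T m n - t) - 1)
                - T m n * (Real.log (T m n) - 1) ≤ t * |Real.log (T m n / 2)| := by
              have h4 := slope_lower (T m n - t) (T m n) (by rw [hb2]; linarith) (by linarith)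
              have h5 : -(t * Real.log (T m n - t)) ≤ t * |Real.log (T m n / 2)| := by
                have := mul_le_mul_of_nonneg_left hlog ht.le
                nlinarith
              nlinarith
            have e1 : ε * ((T m n - t) * (Real.log (T m n - t) - 1)
                - T m n * (Real.log (T m n) - 1)) ≤ ε * (t * |Real.log (T m n / 2)|) :=
              mul_le_mul_of_nonneg_left hs hε.le
            nlinarith [mul_nonneg (mul_nonneg ht.le hε.le) (abs_nonneg (Real.log (T m n + 1))),
              mul_nonneg ht.le (hM m n)]
          · have hd : d m n = 0 := by
              simp [hddef, h0, h1, h2, h3]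
            have hx : T' m n = T m n := by simp [hT'def, hd]
            rw [hx, if_neg h0]
            have : (0:ℝ) ≤ t * (M m n + ε * |Real.log (T m n + 1)| + ε * |Real.log (T m n / 2)|) := by
              have := hM m n
              positivity
            linarith
  have hdiff : otObj M ε T' - otObj M ε T = ∑ m, ∑ n,
      ((T' m n * M m n + ε * (T' m n * (Real.log (T' m n) - 1)))
        - (T m n * M m n + ε * (T m n * (Real.log (T m n) - 1)))) := by
    rw [otObj_eq, otObj_eq, ← Finset.sum_sub_distrib]
    exact Finset.sum_congr rfl fun m _ => (Finset.sum_sub_distrib _ _).symm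
  have hsum : otObj M ε T' - otObj M ε T ≤ t * Ctot + t * (ε * Real.log t) := by
    rw [hdiff]
    calc ∑ m, ∑ n, ((T' m n * M m n + ε * (T' m n * (Real.log (T' m n) - 1)))
          - (T m n * M m n + ε * (T m n * (Real.log (T m n) - 1))))
        ≤ ∑ m, ∑ n, (t * (M m n + ε * |Real.log (T m n + 1)| + ε * |Real.log (T m n / 2)|)
            + (if m = m0 ∧ n = n0 then t * (ε * Real.log t) else 0)) :=
          Finset.sum_le_sum fun m _ => Finset.sum_le_sum fun n _ => key m n
      _ = t * Ctot + t * (ε * Real.log t) := by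
          rw [hCdef]
          simp only [Finset.sum_add_distrib, ite_and]
          congr 1
          · simp only [mul_add, Finset.mul_sum, Finset.sum_add_distrib]
          · have h1 : ∀ x : Fin R1, (∑ x1 : Fin R2,
                if x = m0 then if x1 = n0 then t * (ε * Real.log t) else 0 else 0)
                = if x = m0 then t * (ε * Real.log t) else 0 := by
              intro x; split_ifs with h
              · simp [Finset.sum_ite_eq']
              · simp
            have h2 : (∑ x : Fin R1, if x = m0 then t * (ε * Real.log t) else 0)
                = t * (ε * Real.log t) := by simp [Finset.sum_ite_eq']
            exact (Fintype.sum_congr _ _ h1).trans h2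
  have hlt : otObj M ε T' < otObj M ε T := by
    nlinarith [htlog, ht]
  exact absurd (hTmin T' hT'mem) (not_le.mpr hlt)

/-- Any minimizer of `⟨T, M⟩ - ε H(T)` over `Π(μ, ν)` (with positive marginals)
has the scaling form `T = diag(u) K diag(v)` with `K = exp(-M/ε)` entrywise and
entrywise positive vectors `u`, `v`. -/
lemma sum_mul_indicator {R1 R2 : ℕ} (f : Fin R1 → Fin R2 → ℝ) (a : Fin R1) (b : Fin R2) :
    ∑ p, ∑ q, f p q * (if p = a ∧ q = b then (1:ℝ) else 0) = f a b := by
  have h1 : ∀ p, (∑ q, f p q * (if p = a ∧ q = b then (1:ℝ) else 0))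
      = if p = a then f p b else 0 := by
    intro p
    by_cases hp : p = a
    · subst hp
      simp [ite_and, mul_ite, mul_one, mul_zero, Finset.sum_ite_eq']
    · simp [hp]
  refine (Fintype.sum_congr _ _ h1).trans ?_
  simp [Finset.sum_ite_eq']

theorem entropic_ot_minimizer_scaling_form {R1 R2 : ℕ}
    (M : Matrix (Fin R1) (Fin R2) ℝ) (hM : ∀ m n, 0 ≤ M m n)
    (ε : ℝ) (hε : 0 < ε)
    (K : Matrix (Fin R1) (Fin R2) ℝ) (hK : ∀ m n, K m n = Real.exp (-(M m n) / ε))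
    (μ : Fin R1 → ℝ) (ν : Fin R2 → ℝ)
    (hμ : μ ∈ probSimplex R1) (hν : ν ∈ probSimplex R2)
    (hμpos : ∀ m, 0 < μ m) (hνpos : ∀ n, 0 < ν n)
    (T : Matrix (Fin R1) (Fin R2) ℝ)
    (hT : T ∈ transportPolytope μ ν)
    (hTmin : ∀ T' ∈ transportPolytope μ ν, otObj M ε T ≤ otObj M ε T') :
    ∃ (u : Fin R1 → ℝ) (v : Fin R2 → ℝ),
      (∀ m, 0 < u m) ∧ (∀ n, 0 < v n) ∧
        T = Matrix.diagonal u * K * Matrix.diagonal v := by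
  have hTpos : ∀ m n, 0 < T m n := minimizer_pos M hM ε hε μ ν hμpos hνpos T hT hTmin
  rcases Nat.eq_zero_or_pos R1 with hR1 | hR1
  · subst hR1
    rcases Nat.eq_zero_or_pos R2 with hR2 | hR2
    · subst hR2
      refine ⟨fun m => 1, fun n => 1, fun m => m.elim0, fun n => n.elim0, ?_⟩
      ext m n; exact m.elim0
    · exfalso
      have h1 := hT.2.2 ⟨0, hR2⟩
      simp at h1
      exact absurd h1.symm (hνpos ⟨0, hR2⟩).ne'
  rcases Nat.eq_zero_or_pos R2 with hR2 | hR2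
  · subst hR2
    exfalso
    have h1 := hT.2.1 ⟨0, hR1⟩
    simp at h1
    exact absurd h1.symm (hμpos ⟨0, hR1⟩).ne'
  obtain ⟨hTnn, hrow, hcol⟩ := hT
  -- minimum entry
  obtain ⟨δ, hδpos, hδle⟩ : ∃ δ > (0:ℝ), ∀ p q, δ ≤ T p q := by
    have hne : (Finset.univ : Finset (Fin R1 × Fin R2)).Nonempty :=
      ⟨(⟨0, hR1⟩, ⟨0, hR2⟩), Finset.mem_univ _⟩
    refine ⟨Finset.univ.inf' hne (fun pq => T pq.1 pq.2), ?_, ?_⟩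
    · simp only [gt_iff_lt, Finset.lt_inf'_iff]
      exact fun pq _ => hTpos pq.1 pq.2
    · intro p q
      exact Finset.inf'_le _ (Finset.mem_univ (p, q))
  -- first-order condition
  have hquad : ∀ (m m' : Fin R1) (n n' : Fin R2),
      (M m n + ε * Real.log (T m n)) + (M m' n' + ε * Real.log (T m' n'))
        = (M m n' + ε * Real.log (T m n')) + (M m' n + ε * Real.log (T m' n)) := by
    intro m m' n n'
    rcases eq_or_ne m m' with rfl | hmm'
    · ring
    rcases eq_or_ne n n' with rfl | hnn'
    · ring
    set d : Matrix (Fin R1) (Fin R2) ℝ := fun p q =>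
      (if p = m ∧ q = n then (1:ℝ) else 0) + (if p = m' ∧ q = n' then 1 else 0)
        - (if p = m ∧ q = n' then 1 else 0) - (if p = m' ∧ q = n then 1 else 0) with hddef
    have hdabs : ∀ p q, |d p q| ≤ 1 := by
      intro p q
      simp only [hddef]
      split_ifs <;> simp_all <;> norm_num
    set g : ℝ → ℝ := fun s => ∑ p, ∑ q, ((T p q + s * d p q) * M p q
        + ε * ((T p q + s * d p q) * (Real.log (T p q + s * d p q) - 1))) with hgdef
    have hderiv : HasDerivAt g (∑ p, ∑ q, (M p q + ε * Real.log (T p q)) * d p q) 0 := by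
      apply HasDerivAt.fun_sum
      intro p _
      apply HasDerivAt.fun_sum
      intro q _
      have hx : 0 < T p q := hTpos p q
      have base : HasDerivAt (fun s : ℝ => T p q + s * d p q) (d p q) 0 := by
        simpa using ((hasDerivAt_id (0:ℝ)).mul_const (d p q)).const_add (T p q)
      have h1 : HasDerivAt (fun x : ℝ => x * (Real.log x - 1)) (Real.log (T p q)) (T p q) := by
        have h := (hasDerivAt_id (T p q)).fun_mul ((Real.hasDerivAt_log hx.ne').sub_const 1)
        refine h.congr_deriv ?_
        simp only [id, one_mul, mul_inv_cancel₀ hx.ne']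
        ring
      have h2 : HasDerivAt (fun x : ℝ => x * M p q + ε * (x * (Real.log x - 1)))
          (M p q + ε * Real.log (T p q)) (T p q + 0 * d p q) := by
        rw [zero_mul, add_zero]
        have h := ((hasDerivAt_id (T p q)).mul_const (M p q)).fun_add (h1.const_mul ε)
        refine h.congr_deriv ?_
        ring
      exact h2.comp 0 base
    have hmem : ∀ s : ℝ, |s| ≤ δ →
        (fun p q => T p q + s * d p q) ∈ transportPolytope μ ν := by
      intro s hs
      refine ⟨?_, ?_, ?_⟩
      · intro p q
        show (0:ℝ) ≤ T p q + s * d p q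
        have h5 : |s * d p q| ≤ δ := by
          rw [abs_mul]
          calc |s| * |d p q| ≤ δ * 1 :=
                mul_le_mul hs (hdabs p q) (abs_nonneg _) ((abs_nonneg s).trans hs)
            _ = δ := mul_one δ
        have h6 := (abs_le.mp h5).1
        have h7 := hδle p q
        linarith
      · intro p
        have hzero : ∑ q, d p q = 0 := by
          simp [hddef, ite_and, Finset.sum_add_distrib, Finset.sum_sub_distrib,
            Finset.sum_ite_eq', Finset.sum_ite_eq]
        have : ∑ q, (T p q + s * d p q) = (∑ q, T p q) + s * ∑ q, d p q := by
          rw [Finset.mul_sum, ← Finset.sum_add_distrib]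
        rw [this, hrow p, hzero]; ring
      · intro q
        have hzero : ∑ p, d p q = 0 := by
          simp [hddef, ite_and, Finset.sum_add_distrib, Finset.sum_sub_distrib,
            Finset.sum_ite_eq', Finset.sum_ite_eq]
        have : ∑ p, (T p q + s * d p q) = (∑ p, T p q) + s * ∑ p, d p q := by
          rw [Finset.mul_sum, ← Finset.sum_add_distrib]
        rw [this, hcol q, hzero]; ring
    have hg0 : g 0 = otObj M ε T := by
      rw [hgdef, otObj_eq]
      simp
    have hlocal : IsLocalMin g 0 := by
      have hev : ∀ᶠ s in nhds (0:ℝ), g 0 ≤ g s := by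
        filter_upwards [Metric.closedBall_mem_nhds (0:ℝ) hδpos] with s hs
        rw [Metric.mem_closedBall, Real.dist_eq, sub_zero] at hs
        have hmem' := hmem s hs
        have hgs : g s = otObj M ε (fun p q => T p q + s * d p q) := by
          rw [hgdef]
          exact (otObj_eq M ε _).symm
        rw [hgs, hg0]
        exact hTmin _ hmem'
      exact hev
    have hzero := hlocal.hasDerivAt_eq_zero hderiv
    have heval : ∑ p, ∑ q, (M p q + ε * Real.log (T p q)) * d p q
        = (M m n + ε * Real.log (T m n)) + (M m' n' + ε * Real.log (T m' n'))
          - (M m n' + ε * Real.log (T m n')) - (M m' n + ε * Real.log (T m' n)) := by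
      have e : ∀ p q, (M p q + ε * Real.log (T p q)) * d p q
          = (M p q + ε * Real.log (T p q)) * (if p = m ∧ q = n then (1:ℝ) else 0)
            + (M p q + ε * Real.log (T p q)) * (if p = m' ∧ q = n' then (1:ℝ) else 0)
            - (M p q + ε * Real.log (T p q)) * (if p = m ∧ q = n' then (1:ℝ) else 0)
            - (M p q + ε * Real.log (T p q)) * (if p = m' ∧ q = n then (1:ℝ) else 0) := by
        intro p q
        simp only [hddef]
        ring
      simp only [e, Finset.sum_add_distrib, Finset.sum_sub_distrib]
      rw [sum_mul_indicator, sum_mul_indicator, sum_mul_indicator, sum_mul_indicator]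
    rw [heval] at hzero
    linarith
  -- construct u and v
  set m0 : Fin R1 := ⟨0, hR1⟩
  set n0 : Fin R2 := ⟨0, hR2⟩
  set G : Fin R1 → Fin R2 → ℝ := fun m n => M m n + ε * Real.log (T m n) with hGdef
  refine ⟨fun m => Real.exp ((G m n0 - G m0 n0) / ε), fun n => Real.exp (G m0 n / ε),
    fun m => Real.exp_pos _, fun n => Real.exp_pos _, ?_⟩
  ext m n
  have hentry : (Matrix.diagonal (fun m => Real.exp ((G m n0 - G m0 n0) / ε)) * K *
      Matrix.diagonal (fun n => Real.exp (G m0 n / ε))) m n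
      = Real.exp ((G m n0 - G m0 n0) / ε) * K m n * Real.exp (G m0 n / ε) := by
    rw [Matrix.mul_diagonal, Matrix.diagonal_mul]
  rw [hentry, hK, ← Real.exp_add, ← Real.exp_add]
  have hexp : (G m n0 - G m0 n0) / ε + -(M m n) / ε + G m0 n / ε = Real.log (T m n) := by
    have hq := hquad m m0 n n0
    have e : G m n0 - G m0 n0 + -(M m n) + G m0 n = ε * Real.log (T m n) := by
      simp only [hGdef]
      linarith
    have hne : ε ≠ 0 := hε.ne'
    field_simp
    linarith [e]
  calc T m n = Real.exp (Real.log (T m n)) := (Real.exp_log (hTpos m n)).symm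
    _ = _ := by rw [← hexp]
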